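/- Let 0 < a, 0 < b and a + b < 1, and set τ = 1 − a − b and ā = 1 − a, b̄ = 1 − b. Then (1/τ²)·∫_a^{b̄} ∫_a^{b̄} (min{u, v} − u·v)·Φ⁻¹(v)·Φ⁻¹(u) / (φ(Φ⁻¹(v))·φ(Φ⁻¹(u))) dv du = (1/(4τ²))·[ a·ā·(Φ⁻¹(a))⁴ + b·b̄·(Φ⁻¹(b̄))⁴ − 2·a·b·(Φ⁻¹(a))²·(Φ⁻¹(b̄))² − 2·τ·c₂·(a·(Φ⁻¹(a))² + b·(Φ⁻¹(b̄))²) − τ²·c₂² + τ·c₄ ]. -/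

import Mathlib

open Real MeasureTheory Set Filter Topology

/-- Standard normal density `φ(x) = (2π)^(−1/2) exp(−x²/2)`. -/
noncomputable def stdPDF (x : ℝ) : ℝ := (Real.sqrt (2 * Real.pi))⁻¹ * Real.exp (-x ^ 2 / 2)

/-- Standard normal cumulative distribution function `Φ(x) = ∫_{−∞}^x φ(u) du`. -/
noncomputable def stdCDF (x : ℝ) : ℝ := ∫ u in Set.Iic x, stdPDF u

/-- Mills hazard `h(γ) = φ(γ)/(1 − Φ(γ))`. -/
noncomputable def millsHazard (γ : ℝ) : ℝ := stdPDF γ / (1 - stdCDF γ)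

/-- The standard normal quantile function `Φ⁻¹`, the inverse of `Φ`. -/
noncomputable def stdQuantile : ℝ → ℝ := Function.invFun stdCDF

/-- Trimmed standard normal quantile moment
`c_k = (1/(1 − a − b)) ∫_a^{1−b} (Φ⁻¹(s))^k ds`. -/
noncomputable def trimMoment (a b : ℝ) (k : ℕ) : ℝ :=
  (1 - a - b)⁻¹ * ∫ s in a..(1 - b), (stdQuantile s) ^ k


lemma stdPDF_eq : stdPDF = ProbabilityTheory.gaussianPDFReal 0 1 := by
  ext x
  simp only [stdPDF, ProbabilityTheory.gaussianPDFReal]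
  norm_num

lemma stdPDF_pos (x : ℝ) : 0 < stdPDF x := by
  rw [stdPDF_eq]
  exact ProbabilityTheory.gaussianPDFReal_pos 0 1 x one_ne_zero

lemma stdPDF_cont : Continuous stdPDF := by
  unfold stdPDF
  fun_prop

lemma stdPDF_integrable : Integrable stdPDF := by
  rw [stdPDF_eq]; exact ProbabilityTheory.integrable_gaussianPDFReal 0 1

lemma stdPDF_integral_one : ∫ x, stdPDF x = 1 := by
  rw [stdPDF_eq]; exact ProbabilityTheory.integral_gaussianPDFReal_eq_one 0 one_ne_zero

lemma stdCDF_sub (x y : ℝ) : stdCDF y - stdCDF x = ∫ u in x..y, stdPDF u :=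
  intervalIntegral.integral_Iic_sub_Iic stdPDF_integrable.integrableOn
    stdPDF_integrable.integrableOn

lemma stdCDF_strictMono : StrictMono stdCDF := by
  intro x y hxy
  have h := stdCDF_sub x y
  have hpos : 0 < ∫ u in x..y, stdPDF u :=
    intervalIntegral.intervalIntegral_pos_of_pos
      (stdPDF_integrable.intervalIntegrable) stdPDF_pos hxy
  linarith

lemma stdCDF_mem_Ioo (x : ℝ) : stdCDF x ∈ Set.Ioo (0:ℝ) 1 := by
  constructor
  · have h := stdCDF_sub (x - 1) x
    have hpos : 0 < ∫ u in (x-1)..x, stdPDF u :=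
      intervalIntegral.intervalIntegral_pos_of_pos
        (stdPDF_integrable.intervalIntegrable) stdPDF_pos (by linarith)
    have hnn : 0 ≤ stdCDF (x - 1) :=
      setIntegral_nonneg measurableSet_Iic fun u _ => (stdPDF_pos u).le
    linarith
  · have hsplit : stdCDF x + (∫ u in Set.Ioi x, stdPDF u) = ∫ u, stdPDF u :=
      intervalIntegral.integral_Iic_add_Ioi stdPDF_integrable.integrableOn stdPDF_integrable.integrableOn
    have h2 : (∫ u in x..(x+1), stdPDF u) ≤ ∫ u in Set.Ioi x, stdPDF u := by
      rw [intervalIntegral.integral_of_le (by linarith)]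
      exact setIntegral_mono_set stdPDF_integrable.integrableOn
        (ae_of_all _ fun u => (stdPDF_pos u).le)
        (HasSubset.Subset.eventuallyLE (fun u hu => hu.1))
    have hpos : 0 < ∫ u in x..(x+1), stdPDF u :=
      intervalIntegral.intervalIntegral_pos_of_pos
        (stdPDF_integrable.intervalIntegrable) stdPDF_pos (by linarith)
    rw [stdPDF_integral_one] at hsplit
    linarith

lemma stdCDF_hasDerivAt (x : ℝ) : HasDerivAt stdCDF (stdPDF x) x := by
  have h : ∀ y, stdCDF y = stdCDF 0 + ∫ u in (0:ℝ)..y, stdPDF u := by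
    intro y
    have := stdCDF_sub 0 y
    linarith
  have hd : HasDerivAt (fun y => stdCDF 0 + ∫ u in (0:ℝ)..y, stdPDF u) (stdPDF x) x := by
    refine HasDerivAt.const_add _ ?_
    exact intervalIntegral.integral_hasDerivAt_right
      (stdPDF_integrable.intervalIntegrable)
      (stdPDF_cont.stronglyMeasurableAtFilter _ _)
      stdPDF_cont.continuousAt
  exact hd.congr_of_eventuallyEq (Eventually.of_forall fun y => h y)

lemma stdCDF_surjOn : ∀ p ∈ Set.Ioo (0:ℝ) 1, ∃ x, stdCDF x = p := by
  intro p hp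
  -- limits
  have hB : Tendsto (fun x => ∫ u in x..(0:ℝ), stdPDF u) atBot
      (𝓝 (∫ u in Set.Iic (0:ℝ), stdPDF u)) :=
    intervalIntegral_tendsto_integral_Iic 0 stdPDF_integrable.integrableOn tendsto_id
  have hT : Tendsto (fun x => ∫ u in (0:ℝ)..x, stdPDF u) atTop
      (𝓝 (∫ u in Set.Ioi (0:ℝ), stdPDF u)) :=
    intervalIntegral_tendsto_integral_Ioi 0 stdPDF_integrable.integrableOn tendsto_id
  have hBc : Tendsto stdCDF atBot (𝓝 0) := by
    have : ∀ x, stdCDF x = stdCDF 0 - ∫ u in x..(0:ℝ), stdPDF u := by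
      intro x; have := stdCDF_sub x 0; linarith
    have h0 : stdCDF 0 = ∫ u in Set.Iic (0:ℝ), stdPDF u := rfl
    have h2 := Tendsto.sub (tendsto_const_nhds (x := stdCDF 0) (f := atBot)) hB
    rw [← h0, sub_self] at h2
    exact Tendsto.congr (fun x => (by linarith [stdCDF_sub x 0] : stdCDF 0 - (∫ u in x..(0:ℝ), stdPDF u) = stdCDF x)) h2
  have hTc : Tendsto stdCDF atTop (𝓝 1) := by
    have hsplit : (∫ u in Set.Iic (0:ℝ), stdPDF u) + (∫ u in Set.Ioi (0:ℝ), stdPDF u) = 1 := by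
      rw [intervalIntegral.integral_Iic_add_Ioi stdPDF_integrable.integrableOn stdPDF_integrable.integrableOn,
        stdPDF_integral_one]
    have h0 : stdCDF 0 = ∫ u in Set.Iic (0:ℝ), stdPDF u := rfl
    have h2 := Tendsto.add (tendsto_const_nhds (x := stdCDF 0) (f := atTop)) hT
    rw [h0, hsplit] at h2
    exact Tendsto.congr (fun x => (by linarith [stdCDF_sub 0 x] :
      stdCDF 0 + (∫ u in (0:ℝ)..x, stdPDF u) = stdCDF x)) h2
  obtain ⟨x, hx⟩ := (hBc.eventually (eventually_lt_nhds hp.1)).exists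
  obtain ⟨y, hy⟩ := (hTc.eventually (eventually_gt_nhds hp.2)).exists
  have hxy : x ≤ y := by
    by_contra h
    exact absurd (stdCDF_strictMono (not_le.1 h)) (by linarith)
  have hcont : ContinuousOn stdCDF (Set.Icc x y) :=
    fun z _ => (stdCDF_hasDerivAt z).continuousAt.continuousWithinAt
  obtain ⟨z, _, hz⟩ := intermediate_value_Icc hxy hcont ⟨hx.le, hy.le⟩
  exact ⟨z, hz⟩


lemma stdCDF_inj : Function.Injective stdCDF := stdCDF_strictMono.injective

lemma stdQuantile_stdCDF (x : ℝ) : stdQuantile (stdCDF x) = x :=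
  Function.leftInverse_invFun stdCDF_inj x

lemma stdCDF_stdQuantile {p : ℝ} (hp : p ∈ Set.Ioo (0:ℝ) 1) :
    stdCDF (stdQuantile p) = p :=
  Function.invFun_eq (stdCDF_surjOn p hp)

lemma stdQuantile_strictMonoOn : StrictMonoOn stdQuantile (Set.Ioo (0:ℝ) 1) := by
  intro p hp q hq hpq
  have := stdCDF_stdQuantile hp
  have := stdCDF_stdQuantile hq
  exact stdCDF_strictMono.lt_iff_lt.mp (by rw [stdCDF_stdQuantile hp, stdCDF_stdQuantile hq]; exact hpq)

lemma stdQuantile_image : stdQuantile '' (Set.Ioo (0:ℝ) 1) = Set.univ := by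
  apply Set.eq_univ_of_forall
  intro x
  exact ⟨stdCDF x, stdCDF_mem_Ioo x, stdQuantile_stdCDF x⟩

lemma stdQuantile_continuousAt {p : ℝ} (hp : p ∈ Set.Ioo (0:ℝ) 1) :
    ContinuousAt stdQuantile p := by
  apply stdQuantile_strictMonoOn.continuousAt_of_image_mem_nhds
    (isOpen_Ioo.mem_nhds hp)
  rw [stdQuantile_image]
  exact univ_mem

lemma stdQuantile_hasDerivAt {p : ℝ} (hp : p ∈ Set.Ioo (0:ℝ) 1) :
    HasDerivAt stdQuantile (stdPDF (stdQuantile p))⁻¹ p := by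
  apply HasDerivAt.of_local_left_inverse (stdQuantile_continuousAt hp)
    (stdCDF_hasDerivAt (stdQuantile p)) (stdPDF_pos _).ne'
  filter_upwards [isOpen_Ioo.mem_nhds hp] with x hx
  exact stdCDF_stdQuantile hx


noncomputable def qG (s : ℝ) : ℝ := stdQuantile s ^ 2 / 2
noncomputable def qf (s : ℝ) : ℝ := stdQuantile s * (stdPDF (stdQuantile s))⁻¹

lemma qG_contAt {p : ℝ} (hp : p ∈ Set.Ioo (0:ℝ) 1) : ContinuousAt qG p :=
  (((stdQuantile_continuousAt hp).pow 2).div_const 2 : ContinuousAt _ _)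

lemma qf_contAt {p : ℝ} (hp : p ∈ Set.Ioo (0:ℝ) 1) : ContinuousAt qf p := by
  exact (stdQuantile_continuousAt hp).mul
    ((stdPDF_cont.continuousAt.comp (stdQuantile_continuousAt hp)).inv₀ (stdPDF_pos _).ne')

lemma qG_hasDerivAt {p : ℝ} (hp : p ∈ Set.Ioo (0:ℝ) 1) : HasDerivAt qG (qf p) p := by
  have h : HasDerivAt (fun x => stdQuantile x ^ 2 / 2)
      ((2:ℕ) * stdQuantile p ^ (2 - 1) * (stdPDF (stdQuantile p))⁻¹ / 2) p :=
    ((stdQuantile_hasDerivAt hp).pow 2).div_const 2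
  show HasDerivAt (fun x => stdQuantile x ^ 2 / 2) (qf p) p
  convert h using 1
  simp [qf]
  ring

lemma main_calc (a b : ℝ) (ha : 0 < a) (hb : 0 < b) (hab : a + b < 1) :
    ∫ u in a..(1 - b), ∫ v in a..(1 - b), (min u v - u * v) * qf v * qf u =
      a * (1 - a) * (qG a) ^ 2 + b * (1 - b) * (qG (1 - b)) ^ 2
        - 2 * a * b * (qG a) * (qG (1 - b))
        - 2 * a * (∫ s in a..(1 - b), qG s) * (qG a)
        - 2 * b * (∫ s in a..(1 - b), qG s) * (qG (1 - b))
        + (∫ s in a..(1 - b), (qG s) ^ 2) - (∫ s in a..(1 - b), qG s) ^ 2 := by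
  set β : ℝ := 1 - b with hβ
  have haβ : a < β := by simp only [hβ]; linarith
  have hIcc : Set.Icc a β ⊆ Set.Ioo (0:ℝ) 1 := fun x hx =>
    ⟨lt_of_lt_of_le ha hx.1, lt_of_le_of_lt hx.2 (by simp only [hβ]; linarith)⟩
  -- basic membership helpers
  have hmem : ∀ x y : ℝ, x ∈ Set.Icc a β → y ∈ Set.Icc a β → Set.uIcc x y ⊆ Set.Ioo (0:ℝ) 1 := by
    intro x y hx hy
    exact fun z hz => hIcc (Set.uIcc_subset_Icc hx hy hz)
  -- interval integrability helpers
  have hfi : ∀ x y : ℝ, x ∈ Set.Icc a β → y ∈ Set.Icc a β →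
      IntervalIntegrable qf volume x y := by
    intro x y hx hy
    exact (ContinuousOn.intervalIntegrable fun z hz => (qf_contAt (hmem x y hx hy hz)).continuousWithinAt)
  have hGi : ∀ x y : ℝ, x ∈ Set.Icc a β → y ∈ Set.Icc a β →
      IntervalIntegrable qG volume x y := by
    intro x y hx hy
    exact (ContinuousOn.intervalIntegrable fun z hz => (qG_contAt (hmem x y hx hy hz)).continuousWithinAt)
  have haI : a ∈ Set.Icc a β := ⟨le_refl a, haβ.le⟩
  have hβI : β ∈ Set.Icc a β := ⟨haβ.le, le_refl β⟩
  set S : ℝ := ∫ s in a..β, qG s with hS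
  set Q : ℝ := ∫ s in a..β, (qG s) ^ 2 with hQ
  set I : ℝ → ℝ := fun u => ∫ s in a..u, qG s with hI
  -- integration by parts: ∫ x..y, id * qf
  have parts1 : ∀ x ∈ Set.Icc a β, ∀ y ∈ Set.Icc a β,
      ∫ v in x..y, v * qf v = y * qG y - x * qG x - ∫ v in x..y, qG v := by
    intro x hx y hy
    have h := intervalIntegral.integral_mul_deriv_eq_deriv_mul
      (u := fun z => z) (u' := fun _ => 1) (v := qG) (v' := qf)
      (fun z _ => hasDerivAt_id z)
      (fun z hz => qG_hasDerivAt (hmem x y hx hy hz))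
      intervalIntegrable_const (hfi x y hx hy)
    simpa using h
  have parts2 : ∀ x ∈ Set.Icc a β, ∀ y ∈ Set.Icc a β,
      ∫ v in x..y, (1 - v) * qf v = (1 - y) * qG y - (1 - x) * qG x + ∫ v in x..y, qG v := by
    intro x hx y hy
    have h := intervalIntegral.integral_mul_deriv_eq_deriv_mul
      (u := fun z => 1 - z) (u' := fun _ => -1) (v := qG) (v' := qf)
      (fun z _ => by simpa using (hasDerivAt_id z).const_sub 1)
      (fun z hz => qG_hasDerivAt (hmem x y hx hy hz))
      intervalIntegrable_const (hfi x y hx hy)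
    rw [h]
    have : ∫ z in x..y, (fun _ => (-1:ℝ)) z * qG z = - ∫ v in x..y, qG v := by
      simp only [neg_one_mul]
      exact intervalIntegral.integral_neg
    rw [this]
    ring
  -- derivative of the primitive of qG
  have hI_deriv : ∀ u ∈ Set.Icc a β, HasDerivAt (fun y => ∫ s in a..y, qG s) (qG u) u := by
    intro u hu
    exact intervalIntegral.integral_hasDerivAt_right (hGi a u haI hu)
      (ContinuousAt.stronglyMeasurableAtFilter isOpen_Ioo (fun p hp => qG_contAt hp) u (hIcc hu))
      (qG_contAt (hIcc hu))
  -- inner integral computation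
  have inner_eq : ∀ u ∈ Set.Icc a β,
      (∫ v in a..β, (min u v - u * v) * qf v)
        = -(a * (1 - u)) * qG a + b * u * qG β + u * S - ∫ s in a..u, qG s := by
    intro u hu
    have hki : ∀ x ∈ Set.Icc a β, ∀ y ∈ Set.Icc a β,
        IntervalIntegrable (fun v => (min u v - u * v) * qf v) volume x y := by
      intro x hx y hy
      refine ContinuousOn.intervalIntegrable fun z hz => ContinuousWithinAt.mul ?_
        (qf_contAt (hmem x y hx hy hz)).continuousWithinAt
      exact (((continuous_const.min continuous_id).sub
        (continuous_const.mul continuous_id)).continuousAt).continuousWithinAt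
    have hsplit : (∫ v in a..u, (min u v - u * v) * qf v)
        + (∫ v in u..β, (min u v - u * v) * qf v)
        = ∫ v in a..β, (min u v - u * v) * qf v :=
      intervalIntegral.integral_add_adjacent_intervals (hki a haI u hu) (hki u hu β hβI)
    have e1 : ∫ v in a..u, (min u v - u * v) * qf v = (1 - u) * ∫ v in a..u, v * qf v := by
      rw [← intervalIntegral.integral_const_mul]
      apply intervalIntegral.integral_congr
      intro v hv
      rw [Set.uIcc_of_le hu.1] at hv
      show (min u v - u * v) * qf v = (1 - u) * (v * qf v)
      rw [min_eq_right hv.2]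
      ring
    have e2 : ∫ v in u..β, (min u v - u * v) * qf v = u * ∫ v in u..β, (1 - v) * qf v := by
      rw [← intervalIntegral.integral_const_mul]
      apply intervalIntegral.integral_congr
      intro v hv
      rw [Set.uIcc_of_le hu.2] at hv
      show (min u v - u * v) * qf v = u * ((1 - v) * qf v)
      rw [min_eq_left hv.1]
      ring
    have p1 := parts1 a haI u hu
    have p2 := parts2 u hu β hβI
    have hadj : (∫ s in a..u, qG s) + (∫ s in u..β, qG s) = S :=
      intervalIntegral.integral_add_adjacent_intervals (hGi a u haI hu) (hGi u β hu hβI)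
    have hbβ : (1 - β) = b := by rw [hβ]; ring
    rw [← hsplit, e1, e2, p1, p2, hbβ]
    have h3 : (∫ s in u..β, qG s) = S - ∫ s in a..u, qG s := by linarith
    rw [h3]
    ring
  -- rewrite the double integral
  have hLHS : (∫ u in a..β, ∫ v in a..β, (min u v - u * v) * qf v * qf u)
      = ∫ u in a..β, (-(a * (1 - u)) * qG a + b * u * qG β + u * S - ∫ s in a..u, qG s) * qf u := by
    apply intervalIntegral.integral_congr
    intro u hu
    rw [Set.uIcc_of_le haβ.le] at hu
    show (∫ v in a..β, (min u v - u * v) * qf v * qf u)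
      = (-(a * (1 - u)) * qG a + b * u * qG β + u * S - ∫ s in a..u, qG s) * qf u
    rw [← inner_eq u hu, ← intervalIntegral.integral_mul_const]
  rw [hLHS]
  -- integrability of the outer pieces
  have i1 : IntervalIntegrable (fun u => (1 - u) * qf u) volume a β :=
    ContinuousOn.intervalIntegrable fun z hz =>
      ((continuous_const.sub continuous_id).continuousAt).continuousWithinAt.mul
        (qf_contAt (hmem a β haI hβI hz)).continuousWithinAt
  have i2 : IntervalIntegrable (fun u => u * qf u) volume a β :=
    ContinuousOn.intervalIntegrable fun z hz =>
      (continuous_id.continuousAt).continuousWithinAt.mul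
        (qf_contAt (hmem a β haI hβI hz)).continuousWithinAt
  have i3 : IntervalIntegrable (fun u => (∫ s in a..u, qG s) * qf u) volume a β := by
    refine ContinuousOn.intervalIntegrable fun z hz => ContinuousWithinAt.mul ?_
      (qf_contAt (hmem a β haI hβI hz)).continuousWithinAt
    rw [Set.uIcc_of_le haβ.le] at hz
    exact (hI_deriv z hz).continuousAt.continuousWithinAt
  -- evaluate the three outer integrals
  have o1 : ∫ u in a..β, (1 - u) * qf u = (1 - β) * qG β - (1 - a) * qG a + S :=
    parts2 a haI β hβI
  have o2 : ∫ u in a..β, u * qf u = β * qG β - a * qG a - S :=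
    parts1 a haI β hβI
  have o3 : ∫ u in a..β, (∫ s in a..u, qG s) * qf u = S * qG β - Q := by
    have h := intervalIntegral.integral_mul_deriv_eq_deriv_mul
      (u := fun y => ∫ s in a..y, qG s) (u' := qG) (v := qG) (v' := qf)
      (fun z hz => hI_deriv z (by rwa [Set.uIcc_of_le haβ.le] at hz))
      (fun z hz => qG_hasDerivAt (hmem a β haI hβI hz))
      (hGi a β haI hβI) (hfi a β haI hβI)
    rw [hS, hQ, h]
    simp only [intervalIntegral.integral_same, zero_mul, sub_zero]
    have hq2 : ∫ u in a..β, qG u * qG u = ∫ s in a..β, qG s ^ 2 := by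
      apply intervalIntegral.integral_congr
      intro z _
      show qG z * qG z = qG z ^ 2
      rw [sq]
    rw [hq2]
  -- combine
  have expand : ∫ u in a..β, (-(a * (1 - u)) * qG a + b * u * qG β + u * S - ∫ s in a..u, qG s) * qf u
      = (-(a * qG a)) * (∫ u in a..β, (1 - u) * qf u) + (b * qG β + S) * (∫ u in a..β, u * qf u)
        - ∫ u in a..β, (∫ s in a..u, qG s) * qf u := by
    rw [← intervalIntegral.integral_const_mul, ← intervalIntegral.integral_const_mul,
      ← intervalIntegral.integral_add (i1.const_mul _) (i2.const_mul _),
      ← intervalIntegral.integral_sub (((i1.const_mul _).add (i2.const_mul _))) i3]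
    apply intervalIntegral.integral_congr
    intro z _
    show (-(a * (1 - z)) * qG a + b * z * qG β + z * S - ∫ s in a..z, qG s) * qf z
      = -(a * qG a) * ((1 - z) * qf z) + (b * qG β + S) * (z * qf z)
        - (∫ s in a..z, qG s) * qf z
    ring
  rw [expand, o1, o2, o3, hβ]
  ring


/-- The double-integral expression for the third variance-covariance constant `c₃*`. -/
theorem cStar_three_formula (a b : ℝ) (ha : 0 < a) (hb : 0 < b) (hab : a + b < 1) :
    (1 - a - b)⁻¹ ^ 2 *
      ∫ u in a..(1 - b), ∫ v in a..(1 - b),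
        (min u v - u * v) * stdQuantile v * stdQuantile u /
          (stdPDF (stdQuantile v) * stdPDF (stdQuantile u)) =
    (4 * (1 - a - b) ^ 2)⁻¹ *
      (a * (1 - a) * (stdQuantile a) ^ 4 + b * (1 - b) * (stdQuantile (1 - b)) ^ 4
        - 2 * a * b * (stdQuantile a) ^ 2 * (stdQuantile (1 - b)) ^ 2
        - 2 * (1 - a - b) * trimMoment a b 2 *
            (a * (stdQuantile a) ^ 2 + b * (stdQuantile (1 - b)) ^ 2)
        - (1 - a - b) ^ 2 * (trimMoment a b 2) ^ 2
        + (1 - a - b) * trimMoment a b 4) := by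
  have hτ : (1 : ℝ) - a - b ≠ 0 := by intro h; linarith
  have hint : ∀ u v : ℝ,
      (min u v - u * v) * stdQuantile v * stdQuantile u /
          (stdPDF (stdQuantile v) * stdPDF (stdQuantile u))
        = (min u v - u * v) * qf v * qf u := by
    intro u v
    unfold qf
    rw [div_eq_mul_inv, mul_inv]
    ring
  simp only [hint]
  rw [main_calc a b ha hb hab]
  have hGa : qG a = stdQuantile a ^ 2 / 2 := rfl
  have hGb : qG (1 - b) = stdQuantile (1 - b) ^ 2 / 2 := rfl
  have h2 : (∫ s in a..(1 - b), qG s) = (∫ s in a..(1 - b), stdQuantile s ^ 2) / 2 := by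
    unfold qG
    exact intervalIntegral.integral_div 2 _
  have h4' : ∀ s : ℝ, (qG s) ^ 2 = stdQuantile s ^ 4 / 4 := by
    intro s; unfold qG; ring
  have h4 : (∫ s in a..(1 - b), (qG s) ^ 2) = (∫ s in a..(1 - b), stdQuantile s ^ 4) / 4 := by
    simp only [h4']
    exact intervalIntegral.integral_div 4 _
  rw [hGa, hGb, h2, h4]
  unfold trimMoment
  field_simp
  ring
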